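/- With Q, M(K), N(K) as above, and additionally M_+(K) = {Y ∈ M(K) : Y positive semidefinite} and N_+(K) = {diag(Y) : Y ∈ M_+(K)}, let K ⊆ Q be a convex cone. Then for every i ∈ {1,...,d}: N_+(K) ⊆ N(K) ⊆ (K ∩ {x : x_i = 0}) + (K ∩ {x : x_i = x_0}), where + denotes the Minkowski sum of the two cones. -/

import Mathlib

open Pointwise

def coneQ (d : ℕ) : Set (Fin (d + 1) → ℝ) :=
  {x | ∀ i : Fin d, 0 ≤ x i.succ ∧ x i.succ ≤ x 0}

def LSM (d : ℕ) (K : Set (Fin (d + 1) → ℝ)) : Set (Matrix (Fin (d + 1)) (Fin (d + 1)) ℝ) :=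
  {Y | Y.IsSymm ∧ Y.mulVec (Pi.single 0 1) = Matrix.diag Y ∧
    ∀ i : Fin d, Y.mulVec (Pi.single i.succ 1) ∈ K ∧
      Y.mulVec (Pi.single 0 1 - Pi.single i.succ 1) ∈ K}

def LSMplus (d : ℕ) (K : Set (Fin (d + 1) → ℝ)) :
    Set (Matrix (Fin (d + 1)) (Fin (d + 1)) ℝ) :=
  {Y | Y ∈ LSM d K ∧ Y.PosSemidef}

def LSN (d : ℕ) (K : Set (Fin (d + 1) → ℝ)) : Set (Fin (d + 1) → ℝ) :=
  {v | ∃ Y ∈ LSM d K, Matrix.diag Y = v}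

def LSNplus (d : ℕ) (K : Set (Fin (d + 1) → ℝ)) : Set (Fin (d + 1) → ℝ) :=
  {v | ∃ Y ∈ LSMplus d K, Matrix.diag Y = v}

theorem stmt16 (d : ℕ) (K : Set (Fin (d + 1) → ℝ)) (hKQ : K ⊆ coneQ d)
    (hKconv : Convex ℝ K) (hKcone : ∀ c : ℝ, 0 ≤ c → ∀ x ∈ K, c • x ∈ K) :
    ∀ i : Fin d, LSNplus d K ⊆ LSN d K ∧
      LSN d K ⊆ (K ∩ {x | x i.succ = 0}) + (K ∩ {x | x i.succ = x 0}) := by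
  intro i
  constructor
  · rintro v ⟨Y, ⟨hY, _⟩, hd⟩
    exact ⟨Y, hY, hd⟩
  · rintro v ⟨Y, ⟨hsymm, hdiag, hK⟩, hd⟩
    refine ⟨Y.mulVec (Pi.single 0 1 - Pi.single i.succ 1),
      ⟨(hK i).2, ?_⟩, Y.mulVec (Pi.single i.succ 1), ⟨(hK i).1, ?_⟩, ?_⟩
    · have h1 : Y.mulVec (Pi.single (0 : Fin (d+1)) 1) i.succ = Matrix.diag Y i.succ := by
        rw [hdiag]
      simp only [Matrix.mulVec_single_one, Matrix.col_apply, mul_one, Matrix.diag] at h1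
      show Y.mulVec (Pi.single 0 1 - Pi.single i.succ 1) i.succ = 0
      rw [Matrix.mulVec_sub]
      simp only [Pi.sub_apply, Matrix.mulVec_single_one, Matrix.col_apply, mul_one, h1, sub_self]
    · have h1 : Y.mulVec (Pi.single (0 : Fin (d+1)) 1) i.succ = Matrix.diag Y i.succ := by
        rw [hdiag]
      simp only [Matrix.mulVec_single_one, Matrix.col_apply, mul_one, Matrix.diag] at h1
      show Y.mulVec (Pi.single i.succ 1) i.succ = Y.mulVec (Pi.single i.succ 1) 0
      simp only [Matrix.mulVec_single_one, Matrix.col_apply, mul_one]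
      rw [← h1, ← hsymm.apply i.succ 0]
    · show Y.mulVec (Pi.single 0 1 - Pi.single i.succ 1) + Y.mulVec (Pi.single i.succ 1) = v
      rw [← Matrix.mulVec_add, sub_add_cancel, hdiag, hd]
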